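/- Let λ = (λ_m)_{m≥1} be a non-increasing sequence of nonnegative reals with λ₂ > 0. For each d ≥ 2 fix a nonempty subset I_d = {i₁ < … < i_{#I_d}} ⊆ {1,…,d} and let ∇_d = { k ∈ (ℕ_{≥1})^d : k_{i₁} < k_{i₂} < … < k_{i_{#I_d}} }, with ∇₁ = ℕ_{≥1}; define n(ε,d) = #{ k ∈ ∇_d : Π_{l=1}^d λ_{k_l} > ε² } and consider the absolute error criterion. If λ₁ < 1, then the following are equivalent: (i) the antisymmetric problem is strongly polynomially tractable (∃ C,p>0 ∀d≥1 ∀ε∈(0,1]: n(ε,d) ≤ C·ε^{−p}); (ii) it is polynomially tractable (∃ C,p>0, q≥0 ∀d,ε∈(0,1]: n(ε,d) ≤ C·ε^{−p}·d^q); (iii) there exists τ ∈ (0,∞) with Σ_{m=1}^∞ λ_m^τ < ∞. Moreover, the same three assertions are equivalent if λ₁ ≥ 1 and the number of antisymmetric coordinates grows linearly with the dimension, i.e. there exists c > 0 with #I_d ≥ c·d for all d. -/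

import Mathlib

open scoped ENNReal

/-- The index set `∇_d` for the `I_d`-antisymmetric problem: multi-indices
`k ∈ (ℕ_{≥1})^d` strictly increasing along the ordered coordinates of `I d`. -/
def nablaAsy (I : (d : ℕ) → Finset (Fin d)) (d : ℕ) : Set (Fin d → ℕ) :=
  {k | (∀ l, 1 ≤ k l) ∧ ∀ a ∈ I d, ∀ b ∈ I d, a < b → k a < k b}

/-- The information complexity (absolute error criterion) of the `I_d`-antisymmetric
problem: `n(ε,d) = #{k ∈ ∇_d : ∏_l λ_{k_l} > ε²}`. -/
noncomputable def nAsy (lam : ℕ → ℝ) (I : (d : ℕ) → Finset (Fin d)) (ε : ℝ) (d : ℕ) :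
    ℕ∞ :=
  ({k | k ∈ nablaAsy I d ∧ ε ^ 2 < ∏ l, lam (k l)} : Set (Fin d → ℕ)).encard

/-- Strong polynomial tractability of the antisymmetric problem. -/
def SPTAsy (lam : ℕ → ℝ) (I : (d : ℕ) → Finset (Fin d)) : Prop :=
  ∃ C > (0 : ℝ), ∃ p > (0 : ℝ), ∀ d : ℕ, 1 ≤ d → ∀ ε : ℝ, 0 < ε → ε ≤ 1 →
    (nAsy lam I ε d : ℝ≥0∞) ≤ ENNReal.ofReal (C * ε ^ (-p))

/-- Polynomial tractability of the antisymmetric problem. -/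
def PTAsy (lam : ℕ → ℝ) (I : (d : ℕ) → Finset (Fin d)) : Prop :=
  ∃ C > (0 : ℝ), ∃ p > (0 : ℝ), ∃ q : ℝ, 0 ≤ q ∧
    ∀ d : ℕ, 1 ≤ d → ∀ ε : ℝ, 0 < ε → ε ≤ 1 →
      (nAsy lam I ε d : ℝ≥0∞) ≤ ENNReal.ofReal (C * ε ^ (-p) * (d : ℝ) ^ q)

namespace Stmt19

open Set Function Finset

noncomputable def Sτ (lam : ℕ → ℝ) (τ : ℝ) : ℝ≥0∞ := ∑' m : ℕ, ENNReal.ofReal (lam (m + 1) ^ τ)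

lemma tsum_pi_pow (g : ℕ → ℝ≥0∞) : ∀ d : ℕ, (∑' k : Fin d → ℕ, ∏ l, g (k l)) = (∑' m, g m) ^ d
  | 0 => by
      rw [pow_zero, tsum_eq_single (fun _ => 0) (fun b hb => absurd (Subsingleton.elim b _) hb)]
      simp
  | d + 1 => by
      rw [← (Fin.consEquiv (fun _ : Fin (d + 1) => ℕ)).tsum_eq (fun k => ∏ l, g (k l))]
      have h1 : ∀ p : ℕ × (Fin d → ℕ),
          (∏ l, g ((Fin.consEquiv (fun _ : Fin (d + 1) => ℕ)) p l))
            = g p.1 * ∏ l, g (p.2 l) := by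
        intro p
        rw [Fin.prod_univ_succ]
        simp [Fin.consEquiv]
      rw [tsum_congr h1, ENNReal.tsum_prod']
      have h2 : ∀ m : ℕ, (∑' k : Fin d → ℕ, g m * ∏ l, g (k l))
          = g m * ((∑' m, g m) ^ d) := by
        intro m
        rw [ENNReal.tsum_mul_left, tsum_pi_pow g d]
      rw [tsum_congr h2, ENNReal.tsum_mul_right, pow_succ, mul_comm]


lemma key (lam : ℕ → ℝ) (hnn : ∀ m, 0 ≤ lam m)
    (I : (d : ℕ) → Finset (Fin d)) (τ : ℝ) (hτ : 0 < τ)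
    (ε : ℝ) (hε : 0 < ε) (d : ℕ) :
    (nAsy lam I ε d : ℝ≥0∞) * ENNReal.ofReal (ε ^ (2 * τ)) *
      ((I d).card.factorial : ℝ≥0∞) ≤ (Sτ lam τ) ^ d := by
  classical
  set b := (I d).card with hb
  set A : Set (Fin d → ℕ) :=
    {k | k ∈ nablaAsy I d ∧ ε ^ 2 < ∏ l, lam (k l)} with hA
  set f : ℕ → ℝ≥0∞ := fun m => ENNReal.ofReal (lam m ^ τ) with hf
  set F : (Fin d → ℕ) → ℝ≥0∞ := fun k => ∏ l, f (k l) with hF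
  set G : (Fin d → ℕ) → ℝ≥0∞ := fun k => ∏ l, f (k l + 1) with hG
  have hGsum : (∑' k : Fin d → ℕ, G k) = (Sτ lam τ) ^ d := tsum_pi_pow (fun m => f (m + 1)) d
  set iso := (I d).orderIsoOfFin hb.symm with hiso
  -- the permuting maps
  set ψ : Equiv.Perm (Fin b) → (Fin d → ℕ) → (Fin d → ℕ) :=
    fun σ k l => if h : l ∈ I d then k ((iso (σ (iso.symm ⟨l, h⟩))) : Fin d) else k l with hψ
  have hψmem : ∀ σ k l, (∀ l', 1 ≤ k l') → 1 ≤ ψ σ k l := by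
    intro σ k l hk
    by_cases h : l ∈ I d
    · simp only [hψ, dif_pos h]; exact hk _
    · simp only [hψ, dif_neg h]; exact hk _
  -- F is invariant under ψ
  have hψF : ∀ σ k, F (ψ σ k) = F k := by
    intro σ k
    simp only [hF]
    rw [← Finset.prod_mul_prod_compl (I d) (fun l => f (ψ σ k l)),
        ← Finset.prod_mul_prod_compl (I d) (fun l => f (k l))]
    congr 1
    · rw [← Finset.prod_coe_sort (I d) (fun l => f (ψ σ k l)),
          ← Finset.prod_coe_sort (I d) (fun l => f (k l))]
      have e1 : ∀ x : {y // y ∈ I d}, f (ψ σ k ↑x) = f (k (iso (σ (iso.symm x)))) := by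
        intro x
        simp only [hψ, dif_pos x.2, Subtype.coe_eta]
      rw [Fintype.prod_congr _ _ e1]
      have e2 : (∏ x : {y // y ∈ I d}, f (k (iso (σ (iso.symm x)))))
          = ∏ j : Fin b, f (k (iso (σ j))) := by
        rw [← Equiv.prod_comp iso.toEquiv (fun x => f (k (iso (σ (iso.symm x)))))]
        exact Fintype.prod_congr _ _ fun j =>
          congrArg (fun z => f (k (↑(iso (σ z)) : Fin d))) (iso.toEquiv.symm_apply_apply j)
      rw [e2, Equiv.prod_comp σ (fun j => f (k (iso j)))]
      rw [← Equiv.prod_comp iso.toEquiv (fun x : {y // y ∈ I d} => f (k ↑x))]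
      exact Fintype.prod_congr _ _ fun j => rfl
    · exact Finset.prod_congr rfl fun l hl => by
        simp only [hψ, dif_neg (Finset.mem_compl.mp hl)]
  -- injectivity
  have hψinj : ∀ σ σ' k k', k ∈ A → k' ∈ A → ψ σ k = ψ σ' k' → σ = σ' ∧ k = k' := by
    intro σ σ' k k' hk hk' heq
    obtain ⟨⟨hk1, hk2⟩, -⟩ := hk
    obtain ⟨⟨hk1', hk2'⟩, -⟩ := hk'
    set u : Fin b → ℕ := fun j => k ((iso j : {y // y ∈ I d}) : Fin d) with hu
    set u' : Fin b → ℕ := fun j => k' ((iso j : {y // y ∈ I d}) : Fin d) with hu'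
    have humono : StrictMono u := by
      intro j j' hj
      exact hk2 _ (iso j).2 _ (iso j').2 (Subtype.coe_lt_coe.mpr (iso.strictMono hj))
    have humono' : StrictMono u' := by
      intro j j' hj
      exact hk2' _ (iso j).2 _ (iso j').2 (Subtype.coe_lt_coe.mpr (iso.strictMono hj))
    have hcomp : u ∘ σ = u' ∘ σ' := by
      funext j
      have := congrFun heq ((iso j : {y // y ∈ I d}) : Fin d)
      simpa only [hψ, dif_pos (iso j).2, Subtype.coe_eta, OrderIso.symm_apply_apply,
        comp_apply] using this
    have hrange : Set.range u = Set.range u' := by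
      rw [← Surjective.range_comp σ.surjective u, hcomp,
        Surjective.range_comp σ'.surjective u']
    haveI : WellFoundedLT (Fin b) := inferInstance
    have huu : u = u' := (humono.range_inj humono').mp hrange
    have hkk : k = k' := by
      funext l
      by_cases h : l ∈ I d
      · have e : (↑(iso (iso.symm ⟨l, h⟩)) : Fin d) = l := by
          rw [iso.apply_symm_apply]
        have h5 : u (iso.symm ⟨l, h⟩) = u' (iso.symm ⟨l, h⟩) := congrFun huu _
        simpa only [hu, hu', e] using h5
      · have h6 := congrFun heq l
        simpa only [hψ, dif_neg h] using h6
    refine ⟨?_, hkk⟩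
    apply Equiv.ext; intro j
    apply humono.injective
    have h7 := congrFun hcomp j
    simp only [comp_apply] at h7
    nth_rewrite 2 [huu]
    exact h7
  -- the big injection
  set Φ : Equiv.Perm (Fin b) × A → (Fin d → ℕ) :=
    fun p => fun l => ψ p.1 p.2 l - 1 with hΦ
  have hΦinj : Injective Φ := by
    rintro ⟨σ, k, hk⟩ ⟨σ', k', hk'⟩ h
    have h2 : ψ σ k = ψ σ' k' := by
      funext l
      have h3 := congrFun h l
      have m1 : 1 ≤ ψ σ k l := hψmem _ _ _ hk.1.1
      have m2 : 1 ≤ ψ σ' k' l := hψmem _ _ _ hk'.1.1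
      simp only [hΦ] at h3
      omega
    obtain ⟨hσ, hkk⟩ := hψinj σ σ' k k' hk hk' h2
    exact Prod.ext hσ (Subtype.ext hkk)
  have hGΦ : ∀ p : Equiv.Perm (Fin b) × A, G (Φ p) = F (p.2 : Fin d → ℕ) := by
    rintro ⟨σ, k, hk⟩
    have hsp : ∀ l, (ψ σ k l - 1) + 1 = ψ σ k l := fun l =>
      Nat.succ_pred_eq_of_pos (hψmem σ k l hk.1.1)
    calc G (Φ (σ, ⟨k, hk⟩)) = F (ψ σ k) := by
          simp only [hG, hF, hΦ]
          exact Fintype.prod_congr _ _ fun l => by rw [hsp l]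
      _ = F k := hψF σ k
  have hcheb : (A.encard : ℝ≥0∞) * ENNReal.ofReal (ε ^ (2 * τ))
      ≤ ∑' k : A, F (k : Fin d → ℕ) := by
    rw [← ENNReal.tsum_set_const]
    apply Summable.tsum_le_tsum _ ENNReal.summable ENNReal.summable
    rintro ⟨k, hk⟩
    have h1 : ε ^ (2 * τ) = (ε ^ 2) ^ τ := by
      rw [← Real.rpow_natCast ε 2, ← Real.rpow_mul hε.le]
      norm_num
    have h2 : (ε ^ 2) ^ τ ≤ (∏ l, lam (k l)) ^ τ :=
      Real.rpow_le_rpow (sq_nonneg ε) hk.2.le hτ.le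
    have h3 : (∏ l, lam (k l)) ^ τ = ∏ l, lam (k l) ^ τ :=
      (Real.finset_prod_rpow _ _ (fun i _ => hnn _) τ).symm
    rw [h1]
    calc ENNReal.ofReal ((ε ^ 2) ^ τ)
        ≤ ENNReal.ofReal ((∏ l, lam (k l)) ^ τ) := ENNReal.ofReal_le_ofReal h2
      _ = ∏ l, f (k l) := by
          rw [h3, ENNReal.ofReal_prod_of_nonneg (fun i _ => Real.rpow_nonneg (hnn _) τ)]
  have hsum1 : (∑' p : Equiv.Perm (Fin b) × A, G (Φ p))
      = (b.factorial : ℝ≥0∞) * ∑' k : A, F (k : Fin d → ℕ) := by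
    rw [tsum_congr hGΦ, ENNReal.tsum_prod', tsum_fintype]
    simp only [Finset.sum_const, Finset.card_univ, Fintype.card_perm, Fintype.card_fin,
      nsmul_eq_mul]
  have hsum2 : (∑' p : Equiv.Perm (Fin b) × A, G (Φ p)) ≤ ∑' k : Fin d → ℕ, G k :=
    ENNReal.tsum_comp_le_tsum_of_injective hΦinj G
  calc (nAsy lam I ε d : ℝ≥0∞) * ENNReal.ofReal (ε ^ (2 * τ)) * (b.factorial : ℝ≥0∞)
      ≤ (∑' k : A, F (k : Fin d → ℕ)) * (b.factorial : ℝ≥0∞) := mul_le_mul_left hcheb _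
    _ = (b.factorial : ℝ≥0∞) * ∑' k : A, F (k : Fin d → ℕ) := mul_comm _ _
    _ = ∑' p : Equiv.Perm (Fin b) × A, G (Φ p) := hsum1.symm
    _ ≤ ∑' k : Fin d → ℕ, G k := hsum2
    _ = (Sτ lam τ) ^ d := hGsum

lemma spt_of_bound (lam : ℕ → ℝ) (hnn : ∀ m, 0 ≤ lam m)
    (I : (d : ℕ) → Finset (Fin d)) (τ : ℝ) (hτ : 0 < τ)
    (hsum : Summable (fun m : ℕ => lam (m + 1) ^ τ))
    (C₀ : ℝ) (hC₀ : 0 < C₀)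
    (hbd : ∀ d : ℕ, 1 ≤ d →
      (∑' m : ℕ, lam (m + 1) ^ τ) ^ d ≤ C₀ * ((I d).card.factorial : ℝ)) :
    SPTAsy lam I := by
  refine ⟨C₀, hC₀, 2 * τ, by positivity, fun d hd ε hε hε1 => ?_⟩
  set s : ℝ := ∑' m : ℕ, lam (m + 1) ^ τ with hs
  have hs0 : 0 ≤ s := tsum_nonneg fun m => Real.rpow_nonneg (hnn _) τ
  have hSτ : Sτ lam τ = ENNReal.ofReal s := by
    rw [hs, ENNReal.ofReal_tsum_of_nonneg (fun m => Real.rpow_nonneg (hnn _) τ) hsum, Sτ]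
  have hkey := key lam hnn I τ hτ ε hε d
  rw [hSτ, ← ENNReal.ofReal_pow hs0] at hkey
  have hb1 : (((I d).card.factorial : ℝ≥0∞)) = ENNReal.ofReal ((I d).card.factorial : ℝ) := by
    rw [ENNReal.ofReal_natCast]
  have heps : 0 < ε ^ (2 * τ) := Real.rpow_pos_of_pos hε _
  have hrhs : ENNReal.ofReal (s ^ d)
      ≤ ENNReal.ofReal (C₀ * ε ^ (-(2 * τ))) * ENNReal.ofReal (ε ^ (2 * τ)) *
        ((I d).card.factorial : ℝ≥0∞) := by
    rw [hb1, ← ENNReal.ofReal_mul (by positivity), ← ENNReal.ofReal_mul (by positivity)]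
    apply ENNReal.ofReal_le_ofReal
    have : C₀ * ε ^ (-(2 * τ)) * ε ^ (2 * τ) = C₀ := by
      rw [Real.rpow_neg hε.le, mul_assoc, inv_mul_cancel₀ (ne_of_gt heps), mul_one]
    rw [this]
    exact hbd d hd
  have := le_trans hkey hrhs
  have hcancel := (ENNReal.mul_le_mul_iff_left (by positivity)
      (ENNReal.natCast_ne_top _)).mp this
  exact (ENNReal.mul_le_mul_iff_left (ne_of_gt (ENNReal.ofReal_pos.mpr heps))
      ENNReal.ofReal_ne_top).mp hcancel


lemma spt_case1 (lam : ℕ → ℝ) (hnn : ∀ m, 0 ≤ lam m)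
    (hord : ∀ m m' : ℕ, 1 ≤ m → m ≤ m' → lam m' ≤ lam m)
    (hpos : 0 < lam 1) (h1 : lam 1 < 1)
    (I : (d : ℕ) → Finset (Fin d))
    (τ₀ : ℝ) (hτ₀ : 0 < τ₀) (hsum₀ : Summable (fun m : ℕ => lam (m + 1) ^ τ₀)) :
    SPTAsy lam I := by
  set s₀ : ℝ := ∑' m : ℕ, lam (m + 1) ^ τ₀ with hs₀
  have hs₀0 : 0 ≤ s₀ := tsum_nonneg fun m => Real.rpow_nonneg (hnn _) τ₀
  -- choose r ≥ 0 with lam 1 ^ r * (s₀ + 1) ≤ 1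
  have htend : Filter.Tendsto (fun r : ℝ => lam 1 ^ r) Filter.atTop (nhds 0) :=
    tendsto_rpow_atTop_of_base_lt_one _ (by linarith) h1
  have hev : ∀ᶠ r : ℝ in Filter.atTop, lam 1 ^ r < 1 / (s₀ + 1) :=
    htend.eventually (Filter.Tendsto.eventually_lt_const (by positivity) Filter.tendsto_id)
  obtain ⟨r, hrlt, hr0⟩ := (hev.and (Filter.eventually_ge_atTop (0 : ℝ))).exists
  set τ : ℝ := τ₀ + r with hτdef
  have hτ : 0 < τ := by positivity
  have hptwise : ∀ m : ℕ, lam (m + 1) ^ τ ≤ lam 1 ^ r * lam (m + 1) ^ τ₀ := by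
    intro m
    rcases eq_or_lt_of_le (hnn (m + 1)) with h0 | h0
    · rw [← h0, Real.zero_rpow (ne_of_gt hτ), Real.zero_rpow (ne_of_gt hτ₀), mul_zero]
    · rw [hτdef, add_comm τ₀ r, Real.rpow_add h0]
      apply mul_le_mul_of_nonneg_right _ (Real.rpow_nonneg (hnn _) τ₀)
      exact Real.rpow_le_rpow (hnn _) (hord 1 (m + 1) le_rfl (by omega)) hr0
  have hsum : Summable (fun m : ℕ => lam (m + 1) ^ τ) := by
    apply Summable.of_nonneg_of_le (fun m => Real.rpow_nonneg (hnn _) τ) hptwise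
      (hsum₀.mul_left _)
  have hsle : (∑' m : ℕ, lam (m + 1) ^ τ) ≤ 1 := by
    have h2 : (∑' m : ℕ, lam (m + 1) ^ τ) ≤ lam 1 ^ r * s₀ := by
      rw [hs₀, ← tsum_mul_left]
      exact Summable.tsum_le_tsum hptwise hsum (hsum₀.mul_left _)
    have h3 : lam 1 ^ r * s₀ ≤ (1 / (s₀ + 1)) * (s₀ + 1) := by
      apply mul_le_mul hrlt.le (by linarith) hs₀0 (by positivity)
    rw [one_div, inv_mul_cancel₀ (by positivity)] at h3
    linarith
  apply spt_of_bound lam hnn I τ hτ hsum 1 one_pos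
  intro d hd
  rw [one_mul]
  calc (∑' m : ℕ, lam (m + 1) ^ τ) ^ d ≤ 1 := by
        apply pow_le_one₀ (tsum_nonneg fun m => Real.rpow_nonneg (hnn _) τ) hsle
    _ ≤ ((I d).card.factorial : ℝ) := by
        exact_mod_cast Nat.one_le_iff_ne_zero.mpr (Nat.factorial_ne_zero _)

lemma spt_case2 (lam : ℕ → ℝ) (hnn : ∀ m, 0 ≤ lam m)
    (I : (d : ℕ) → Finset (Fin d))
    (c : ℝ) (hc : 0 < c) (hcard : ∀ d : ℕ, 1 ≤ d → c * d ≤ ((I d).card : ℝ))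
    (τ : ℝ) (hτ : 0 < τ) (hsum : Summable (fun m : ℕ => lam (m + 1) ^ τ)) :
    SPTAsy lam I := by
  set s : ℝ := ∑' m : ℕ, lam (m + 1) ^ τ with hs
  have hs0 : 0 ≤ s := tsum_nonneg fun m => Real.rpow_nonneg (hnn _) τ
  set t : ℝ := (max s 1) ^ (1 / c) with ht
  have ht1 : 1 ≤ t := Real.one_le_rpow (le_max_right s 1) (by positivity)
  set C₀ : ℝ := ∑' n : ℕ, t ^ n / n.factorial with hC₀def
  have hsumC : Summable (fun n : ℕ => t ^ n / n.factorial) := Real.summable_pow_div_factorial t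
  have hterm : ∀ n : ℕ, t ^ n / n.factorial ≤ C₀ := fun n =>
    Summable.le_tsum hsumC n fun j _ => by positivity
  have hC₀1 : 1 ≤ C₀ := by
    have := hterm 0
    simpa using this
  apply spt_of_bound lam hnn I τ hτ hsum C₀ (by linarith)
  intro d hd
  set m : ℕ := ⌈c * d⌉₊ with hm
  have hm1 : c * d ≤ (m : ℝ) := Nat.le_ceil _
  have hm2 : m ≤ (I d).card := Nat.ceil_le.mpr (hcard d hd)
  have step1 : s ^ d ≤ t ^ m := by
    calc s ^ d ≤ (max s 1) ^ d := pow_le_pow_left₀ hs0 (le_max_left s 1) d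
      _ = (max s 1) ^ (d : ℝ) := (Real.rpow_natCast _ d).symm
      _ ≤ (max s 1) ^ ((1 / c) * m) := by
          apply Real.rpow_le_rpow_of_exponent_le (le_max_right s 1)
          rw [one_div, ← mul_le_mul_iff_right₀ hc, ← mul_assoc, mul_inv_cancel₀ (ne_of_gt hc), one_mul]
          exact hm1
      _ = ((max s 1) ^ (1 / c)) ^ (m : ℝ) := by
          rw [← Real.rpow_mul (by positivity)]
      _ = t ^ m := by rw [← ht, Real.rpow_natCast]
  have step2 : t ^ m ≤ C₀ * (m.factorial : ℝ) := by
    have h4 := hterm m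
    rw [div_le_iff₀ (by positivity)] at h4
    exact h4
  calc s ^ d ≤ C₀ * (m.factorial : ℝ) := step1.trans step2
    _ ≤ C₀ * ((I d).card.factorial : ℝ) := by
        apply mul_le_mul_of_nonneg_left _ (by linarith)
        exact_mod_cast Nat.factorial_le hm2


lemma spt_to_pt (lam : ℕ → ℝ) (I : (d : ℕ) → Finset (Fin d)) (h : SPTAsy lam I) :
    PTAsy lam I := by
  obtain ⟨C, hC, p, hp, hb⟩ := h
  refine ⟨C, hC, p, hp, 0, le_rfl, fun d hd ε hε hε1 => ?_⟩
  have h1 : ((d : ℝ)) ^ (0 : ℝ) = 1 := Real.rpow_zero _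
  rw [h1, mul_one]
  exact hb d hd ε hε hε1

lemma pt_summable (lam : ℕ → ℝ) (hnn : ∀ m, 0 ≤ lam m)
    (hord : ∀ m m' : ℕ, 1 ≤ m → m ≤ m' → lam m' ≤ lam m)
    (I : (d : ℕ) → Finset (Fin d)) (h : PTAsy lam I) :
    ∃ τ : ℝ, 0 < τ ∧ Summable (fun m : ℕ => lam (m + 1) ^ τ) := by
  classical
  obtain ⟨C, hC, p, hp, q, hq, hbound⟩ := h
  -- step 1
  have step1 : ∀ n : ℕ, 1 ≤ n → ∀ ε : ℝ, 0 < ε → ε ≤ 1 → ε ^ 2 < lam n →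
      (n : ℝ) ≤ C * ε ^ (-p) := by
    intro n hn ε hε hε1 hlt
    have hb := hbound 1 le_rfl ε hε hε1
    set f : ℕ → (Fin 1 → ℕ) := fun i => fun _ => i + 1 with hf
    have hfinj : Injective f := by
      intro i j hij
      have h0 := congrFun hij 0
      simp only [hf] at h0
      omega
    set Fs : Finset (Fin 1 → ℕ) := (Finset.range n).image f with hFs
    have hsub : (Fs : Set (Fin 1 → ℕ)) ⊆
        {k | k ∈ nablaAsy I 1 ∧ ε ^ 2 < ∏ l, lam (k l)} := by
      intro x hx
      simp only [hFs, Finset.coe_image, Set.mem_image, Finset.coe_range, Set.mem_Iio] at hx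
      obtain ⟨i, hi, rfl⟩ := hx
      refine ⟨⟨fun l => Nat.succ_le_succ (Nat.zero_le i), fun a _ b _ hab => absurd (Subsingleton.elim a b) hab.ne⟩, ?_⟩
      rw [Fin.prod_univ_one]
      calc ε ^ 2 < lam n := hlt
        _ ≤ lam (i + 1) := hord (i + 1) n (by omega) (by omega)
    have hcard : Fs.card = n := by
      rw [hFs, Finset.card_image_of_injective _ hfinj, Finset.card_range]
    have hen : (n : ℝ≥0∞) ≤ (nAsy lam I ε 1 : ℝ≥0∞) := by
      have h2 : (Fs : Set (Fin 1 → ℕ)).encard ≤ nAsy lam I ε 1 := Set.encard_mono hsub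
      rw [Set.encard_coe_eq_coe_finsetCard, hcard] at h2
      exact_mod_cast ENat.toENNReal_le.mpr h2
    have h3 := le_trans hen hb
    rw [Nat.cast_one, Real.one_rpow, mul_one, ← ENNReal.ofReal_natCast n] at h3
    exact (ENNReal.ofReal_le_ofReal_iff (by positivity)).mp h3
  -- step 2 : if lam n > 1 then n ≤ C
  have step2 : ∀ n : ℕ, 1 ≤ n → 1 < lam n → (n : ℝ) ≤ C := by
    intro n hn h1
    have := step1 n hn 1 one_pos le_rfl (by rw [one_pow]; exact h1)
    rwa [Real.one_rpow, mul_one] at this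
  -- step 3
  have step3 : ∀ n : ℕ, 1 ≤ n → 0 < lam n → lam n ≤ 1 →
      (n : ℝ) ≤ C * (lam n / 2) ^ (-(p / 2)) := by
    intro n hn h0 h1
    set ε : ℝ := Real.sqrt (lam n / 2) with hε
    have hε0 : 0 < ε := Real.sqrt_pos.mpr (by linarith)
    have hε1 : ε ≤ 1 := by
      rw [hε, show (1 : ℝ) = Real.sqrt 1 by rw [Real.sqrt_one]]
      exact Real.sqrt_le_sqrt (by linarith)
    have hε2 : ε ^ 2 = lam n / 2 := Real.sq_sqrt (by linarith)
    have h4 := step1 n hn ε hε0 hε1 (by rw [hε2]; linarith)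
    have h5 : ε ^ (-p) = (lam n / 2) ^ (-(p / 2)) := by
      rw [hε, Real.sqrt_eq_rpow, ← Real.rpow_mul (by linarith)]
      ring_nf
    rwa [h5] at h4
  -- step 4 : for n > C, lam n ^ p ≤ 2^p * C^2 / n^2
  have step4 : ∀ n : ℕ, 1 ≤ n → C < n → lam n ^ p ≤ 2 ^ p * (C / n) ^ 2 := by
    intro n hn hCn
    have hn0 : (0 : ℝ) < n := by exact_mod_cast Nat.pos_of_ne_zero (by omega)
    rcases eq_or_lt_of_le (hnn n) with h0 | h0
    · rw [← h0, Real.zero_rpow (ne_of_gt hp)]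
      positivity
    have h1 : lam n ≤ 1 := by
      by_contra hc
      exact absurd (step2 n hn (by linarith)) (by linarith)
    have h4 := step3 n hn h0 h1
    set x : ℝ := lam n / 2 with hx
    have hx0 : 0 < x := by rw [hx]; linarith
    have hy0 : 0 < x ^ (p / 2) := Real.rpow_pos_of_pos hx0 _
    have h6 : (n : ℝ) ≤ C / x ^ (p / 2) := by
      rw [div_eq_mul_inv]
      rwa [Real.rpow_neg hx0.le] at h4
    have h7 : x ^ (p / 2) ≤ C / n := by
      rw [le_div_iff₀ hn0]
      rw [le_div_iff₀ hy0] at h6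
      linarith [h6]
    have h8 : (x ^ (p / 2)) ^ 2 ≤ (C / n) ^ 2 := by
      apply pow_le_pow_left₀ hy0.le h7
    have h9 : (x ^ (p / 2)) ^ 2 = x ^ p := by
      rw [← Real.rpow_natCast (x ^ (p / 2)) 2, ← Real.rpow_mul hx0.le]
      norm_num
    have h10 : lam n ^ p = 2 ^ p * x ^ p := by
      rw [← Real.mul_rpow (by norm_num) hx0.le]
      congr 1
      rw [hx]; ring
    rw [h10, ← h9]
    exact mul_le_mul_of_nonneg_left h8 (Real.rpow_nonneg (by norm_num) p)
  -- step 5 : summability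
  refine ⟨p, hp, ?_⟩
  set N : ℕ := ⌈C⌉₊ + 1 with hN
  rw [← summable_nat_add_iff N]
  have hmaj : Summable (fun m : ℕ => (2 ^ p * C ^ 2) * (1 / ((m : ℝ) + 1) ^ 2)) := by
    apply Summable.mul_left
    have h11 : Summable (fun n : ℕ => 1 / (n : ℝ) ^ 2) :=
      Real.summable_one_div_nat_pow.mpr one_lt_two
    have := (summable_nat_add_iff 1).mpr h11
    apply this.congr
    intro m
    push_cast
    ring
  apply Summable.of_nonneg_of_le (fun m => Real.rpow_nonneg (hnn _) p) _ hmaj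
  intro m
  set n : ℕ := m + N + 1 with hn
  have hn1 : 1 ≤ n := by omega
  have hCn : C < n := by
    have h12 : C ≤ (⌈C⌉₊ : ℝ) := Nat.le_ceil C
    have h13 : (⌈C⌉₊ : ℝ) < n := by
      have : ⌈C⌉₊ < n := by omega
      exact_mod_cast this
    linarith
  calc lam (m + N + 1) ^ p ≤ 2 ^ p * (C / n) ^ 2 := step4 n hn1 hCn
    _ ≤ 2 ^ p * C ^ 2 * (1 / ((m : ℝ) + 1) ^ 2) := by
        have hm1 : (0 : ℝ) < (m : ℝ) + 1 := by positivity
        have hmn : (m : ℝ) + 1 ≤ (n : ℝ) := by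
          have : m + 1 ≤ n := by omega
          exact_mod_cast this
        have : (C / n) ^ 2 ≤ (C / ((m : ℝ) + 1)) ^ 2 := by
          apply pow_le_pow_left₀ (by positivity)
          apply div_le_div_of_nonneg_left hC.le hm1 hmn
        calc 2 ^ p * (C / ↑n) ^ 2 ≤ 2 ^ p * (C / ((m : ℝ) + 1)) ^ 2 :=
              mul_le_mul_of_nonneg_left this (Real.rpow_nonneg (by norm_num) p)
          _ = 2 ^ p * C ^ 2 * (1 / ((m : ℝ) + 1) ^ 2) := by
              field_simp


end Stmt19

/-- **Paper Theorem 5.12** (tractability of antisymmetric tensor product problems,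
absolute error criterion): if `λ₁ < 1`, then strong polynomial tractability,
polynomial tractability, and `λ ∈ ℓ_τ` for some `τ > 0` are equivalent; the same three
assertions are equivalent if `λ₁ ≥ 1` and the number `#I_d` of antisymmetric
coordinates grows linearly with `d`. -/
theorem stmt19 (lam : ℕ → ℝ)
    (hnn : ∀ m, 0 ≤ lam m)
    (hord : ∀ m m' : ℕ, 1 ≤ m → m ≤ m' → lam m' ≤ lam m)
    (hlam2 : 0 < lam 2)
    (I : (d : ℕ) → Finset (Fin d)) (hI : ∀ d, 2 ≤ d → (I d).Nonempty) :
    (lam 1 < 1 →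
      (SPTAsy lam I ↔ PTAsy lam I) ∧
      (PTAsy lam I ↔ ∃ τ : ℝ, 0 < τ ∧ Summable (fun m : ℕ => lam (m + 1) ^ τ))) ∧
    ((1 ≤ lam 1 ∧ ∃ c > (0 : ℝ), ∀ d : ℕ, 1 ≤ d → c * d ≤ ((I d).card : ℝ)) →
      (SPTAsy lam I ↔ PTAsy lam I) ∧
      (PTAsy lam I ↔ ∃ τ : ℝ, 0 < τ ∧ Summable (fun m : ℕ => lam (m + 1) ^ τ))) := by
  have hpos1 : 0 < lam 1 := lt_of_lt_of_le hlam2 (hord 1 2 le_rfl (by omega))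
  constructor
  · intro hlt
    have hback : (∃ τ : ℝ, 0 < τ ∧ Summable (fun m : ℕ => lam (m + 1) ^ τ)) →
        SPTAsy lam I := by
      rintro ⟨τ, hτ, hsum⟩
      exact Stmt19.spt_case1 lam hnn hord hpos1 hlt I τ hτ hsum
    refine ⟨⟨Stmt19.spt_to_pt lam I, fun hPT => hback (Stmt19.pt_summable lam hnn hord I hPT)⟩,
      ⟨Stmt19.pt_summable lam hnn hord I, fun h => Stmt19.spt_to_pt lam I (hback h)⟩⟩
  · rintro ⟨-, c, hc, hcard⟩
    have hback : (∃ τ : ℝ, 0 < τ ∧ Summable (fun m : ℕ => lam (m + 1) ^ τ)) →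
        SPTAsy lam I := by
      rintro ⟨τ, hτ, hsum⟩
      exact Stmt19.spt_case2 lam hnn I c hc hcard τ hτ hsum
    refine ⟨⟨Stmt19.spt_to_pt lam I, fun hPT => hback (Stmt19.pt_summable lam hnn hord I hPT)⟩,
      ⟨Stmt19.pt_summable lam hnn hord I, fun h => Stmt19.spt_to_pt lam I (hback h)⟩⟩
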